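/- (Theorem 1, first part — algebraic core.) Let n, t, e_φ be vectors in ℝ³ with ‖e_φ‖ = 1, n · e_φ = 0 and t = n × e_φ. Let B, B̂ ∈ ℝ³ and χ, w, v̂_φ ∈ ℝ. Suppose the pre-shock velocity is v = χ • B + w • e_φ, the post-shock velocity is v̂ = v̂_φ • e_φ, the tangential electric-field jump condition (v × B) · t = (v̂ × B̂) · t holds, and the normal field component is continuous and nonzero: B · n = B̂ · n and B · n ≠ 0. Then v̂_φ = w; i.e., the rotational speed of the disk material adjacent to the shock equals the co-rotation speed w = ω r sinθ of the field line through that point. -/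

import Mathlib

open Matrix InnerProductSpace

/-- The cross product on `ℝ³`, viewed as `EuclideanSpace ℝ (Fin 3)`. -/
noncomputable def cross3 (x y : EuclideanSpace ℝ (Fin 3)) : EuclideanSpace ℝ (Fin 3) :=
  WithLp.toLp 2 (crossProduct x y)

/-- Theorem 1 (first part, algebraic core): at a point of the shock boundary of a
disk region with no meridional motion, the tangential electric-field jump condition
together with continuity of the nonzero normal magnetic field component forces the
disk rotational speed `v̂_φ` to equal the co-rotation speed `w = ω r sinθ` of the
field line through that point. -/
theorem disk_rotation_theorem
    (n t ephi B Bhat v vhat : EuclideanSpace ℝ (Fin 3))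
    (χ w vphihat : ℝ)
    (hnorm : ‖ephi‖ = 1)
    (hperp : ⟪n, ephi⟫_ℝ = 0)
    (ht : t = cross3 n ephi)
    (hv : v = χ • B + w • ephi)
    (hvhat : vhat = vphihat • ephi)
    (hjump : ⟪cross3 v B, t⟫_ℝ = ⟪cross3 vhat Bhat, t⟫_ℝ)
    (hBn : ⟪B, n⟫_ℝ = ⟪Bhat, n⟫_ℝ)
    (hBn0 : ⟪B, n⟫_ℝ ≠ 0) :
    vphihat = w := by
  have h1 : ⟪ephi, ephi⟫_ℝ = 1 := by
    rw [real_inner_self_eq_norm_sq, hnorm]; norm_num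
  subst ht hv hvhat
  simp only [cross3, crossProduct, PiLp.inner_apply, RCLike.inner_apply, conj_trivial,
    Fin.sum_univ_three, PiLp.add_apply, PiLp.smul_apply, smul_eq_mul,
    LinearMap.mk₂_apply, WithLp.ofLp_toLp, cons_val_zero, cons_val_one, head_cons, cons_val_two, tail_cons] at *
  have key : (vphihat - w) * (B 0 * n 0 + B 1 * n 1 + B 2 * n 2) = 0 := by
    linear_combination hjump
      + (vphihat * (Bhat 0 * ephi 0 + Bhat 1 * ephi 1 + Bhat 2 * ephi 2)
         - w * (B 0 * ephi 0 + B 1 * ephi 1 + B 2 * ephi 2)) * hperp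
      + (w * (B 0 * n 0 + B 1 * n 1 + B 2 * n 2)
         - vphihat * (Bhat 0 * n 0 + Bhat 1 * n 1 + Bhat 2 * n 2)) * h1
      + vphihat * hBn
  rcases mul_eq_zero.mp key with h | h
  · linarith
  · exact absurd (by linear_combination h) hBn0
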